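/- arXiv:1309.7535 — 4 statements merged into one kernel-verified Lean document; each statement's English description precedes it below -/
import Mathlib

section
/- Let T = A·B be the 11x11 matrix where A is block diagonal with upper-left 4x4 block M = [[2,1,1,1],[-1,0,-1,-1],[-1,-1,0,-1],[-1,-1,-1,0]] and lower-right block the 7x7 identity, and B is the permutation matrix of the permutation (1)(9,10,11,2,3,4,5,6,7,8) on 11 coordinates. Then T preserves the quadratic form q(d, m1, ..., m10) = d^2 - m1^2 - ... - m10^2 on R^11. -/
open Matrix

/-- The Cremona matrix. -/
def M : Matrix (Fin 4) (Fin 4) ℝ :=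
  !![2, 1, 1, 1; -1, 0, -1, -1; -1, -1, 0, -1; -1, -1, -1, 0]

/-- Block diagonal matrix with blocks `M` and the 7×7 identity. -/
def A : Matrix (Fin 11) (Fin 11) ℝ :=
  Matrix.reindex finSumFinEquiv finSumFinEquiv (Matrix.fromBlocks M 0 0 (1 : Matrix (Fin 7) (Fin 7) ℝ))

/-- The permutation (1)(9,10,11,2,3,4,5,6,7,8) (in 1-indexed notation) of 11 coordinates. -/
def σ : Equiv.Perm (Fin 11) where
  toFun := ![0, 2, 3, 4, 5, 6, 7, 8, 9, 10, 1]
  invFun := ![0, 10, 1, 2, 3, 4, 5, 6, 7, 8, 9]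
  left_inv := by decide
  right_inv := by decide

/-- The permutation matrix of `σ`. -/
def B : Matrix (Fin 11) (Fin 11) ℝ := σ.permMatrix ℝ

/-- Lesieutre's matrix `T = A · B`. -/
def T : Matrix (Fin 11) (Fin 11) ℝ := A * B

/-- The intersection form `d² - m₁² - ⋯ - m₁₀²` on ℝ¹¹. -/
def q (v : Fin 11 → ℝ) : ℝ := v 0 ^ 2 - ∑ i : Fin 10, v i.succ ^ 2

def A' : Matrix (Fin 11) (Fin 11) ℝ :=
  !![2,1,1,1,0,0,0,0,0,0,0;
     -1,0,-1,-1,0,0,0,0,0,0,0;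
     -1,-1,0,-1,0,0,0,0,0,0,0;
     -1,-1,-1,0,0,0,0,0,0,0,0;
     0,0,0,0,1,0,0,0,0,0,0;
     0,0,0,0,0,1,0,0,0,0,0;
     0,0,0,0,0,0,1,0,0,0,0;
     0,0,0,0,0,0,0,1,0,0,0;
     0,0,0,0,0,0,0,0,1,0,0;
     0,0,0,0,0,0,0,0,0,1,0;
     0,0,0,0,0,0,0,0,0,0,1]

set_option maxHeartbeats 1000000 in
lemma A_eq : A = A' := by
  ext i j
  fin_cases i <;> fin_cases j <;> rfl

@[simp] lemma cons_val_five {α : Type*} {m : ℕ} (x : α) (u : Fin m.succ.succ.succ.succ.succ → α) :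
    Matrix.vecCons x u 5 = Matrix.vecHead (Matrix.vecTail (Matrix.vecTail (Matrix.vecTail (Matrix.vecTail (u))))) := rfl

@[simp] lemma cons_val_six {α : Type*} {m : ℕ} (x : α) (u : Fin m.succ.succ.succ.succ.succ.succ → α) :
    Matrix.vecCons x u 6 = Matrix.vecHead (Matrix.vecTail (Matrix.vecTail (Matrix.vecTail (Matrix.vecTail (Matrix.vecTail (u)))))) := rfl

@[simp] lemma cons_val_seven {α : Type*} {m : ℕ} (x : α) (u : Fin m.succ.succ.succ.succ.succ.succ.succ → α) :
    Matrix.vecCons x u 7 = Matrix.vecHead (Matrix.vecTail (Matrix.vecTail (Matrix.vecTail (Matrix.vecTail (Matrix.vecTail (Matrix.vecTail (u))))))) := rfl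

@[simp] lemma cons_val_eight {α : Type*} {m : ℕ} (x : α) (u : Fin m.succ.succ.succ.succ.succ.succ.succ.succ → α) :
    Matrix.vecCons x u 8 = Matrix.vecHead (Matrix.vecTail (Matrix.vecTail (Matrix.vecTail (Matrix.vecTail (Matrix.vecTail (Matrix.vecTail (Matrix.vecTail (u)))))))) := rfl

@[simp] lemma cons_val_nine {α : Type*} {m : ℕ} (x : α) (u : Fin m.succ.succ.succ.succ.succ.succ.succ.succ.succ → α) :
    Matrix.vecCons x u 9 = Matrix.vecHead (Matrix.vecTail (Matrix.vecTail (Matrix.vecTail (Matrix.vecTail (Matrix.vecTail (Matrix.vecTail (Matrix.vecTail (Matrix.vecTail (u))))))))) := rfl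

@[simp] lemma cons_val_ten {α : Type*} {m : ℕ} (x : α) (u : Fin m.succ.succ.succ.succ.succ.succ.succ.succ.succ.succ → α) :
    Matrix.vecCons x u 10 = Matrix.vecHead (Matrix.vecTail (Matrix.vecTail (Matrix.vecTail (Matrix.vecTail (Matrix.vecTail (Matrix.vecTail (Matrix.vecTail (Matrix.vecTail (Matrix.vecTail (u)))))))))) := rfl

set_option maxHeartbeats 1000000 in
/-- `T = A·B` preserves the quadratic form `q(d, m₁, …, m₁₀) = d² - m₁² - ⋯ - m₁₀²` on ℝ¹¹. -/
theorem T_preserves_q (v : Fin 11 → ℝ) : q (T.mulVec v) = q v := by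
  have hB : B.mulVec v = ![v 0, v 2, v 3, v 4, v 5, v 6, v 7, v 8, v 9, v 10, v 1] := by
    funext i
    fin_cases i <;>
      simp [B, σ, Matrix.mulVec, dotProduct, Fin.sum_univ_succ, PEquiv.toMatrix_apply,
        Equiv.toPEquiv]
  have hT : T.mulVec v = A.mulVec (B.mulVec v) := by
    rw [T, ← Matrix.mulVec_mulVec]
  rw [hT, hB, A_eq]
  have hA : ∀ w : Fin 11 → ℝ, A'.mulVec w =
      ![2 * w 0 + w 1 + w 2 + w 3, -w 0 - w 2 - w 3, -w 0 - w 1 - w 3, -w 0 - w 1 - w 2,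
        w 4, w 5, w 6, w 7, w 8, w 9, w 10] := by
    intro w
    funext i
    fin_cases i <;>
      (simp [A', Matrix.mulVec, dotProduct, Fin.sum_univ_succ,
        show (Fin.succ (0:Fin 1) : Fin 2) = 1 from rfl,
        show (Fin.succ (0:Fin 2) : Fin 3) = 1 from rfl,
        show (Fin.succ (1:Fin 2) : Fin 3) = 2 from rfl,
        show (Fin.succ (0:Fin 3) : Fin 4) = 1 from rfl,
        show (Fin.succ (1:Fin 3) : Fin 4) = 2 from rfl,
        show (Fin.succ (2:Fin 3) : Fin 4) = 3 from rfl,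
        show (Fin.succ (0:Fin 4) : Fin 5) = 1 from rfl,
        show (Fin.succ (1:Fin 4) : Fin 5) = 2 from rfl,
        show (Fin.succ (2:Fin 4) : Fin 5) = 3 from rfl,
        show (Fin.succ (3:Fin 4) : Fin 5) = 4 from rfl,
        show (Fin.succ (0:Fin 5) : Fin 6) = 1 from rfl,
        show (Fin.succ (1:Fin 5) : Fin 6) = 2 from rfl,
        show (Fin.succ (2:Fin 5) : Fin 6) = 3 from rfl,
        show (Fin.succ (3:Fin 5) : Fin 6) = 4 from rfl,
        show (Fin.succ (4:Fin 5) : Fin 6) = 5 from rfl,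
        show (Fin.succ (0:Fin 6) : Fin 7) = 1 from rfl,
        show (Fin.succ (1:Fin 6) : Fin 7) = 2 from rfl,
        show (Fin.succ (2:Fin 6) : Fin 7) = 3 from rfl,
        show (Fin.succ (3:Fin 6) : Fin 7) = 4 from rfl,
        show (Fin.succ (4:Fin 6) : Fin 7) = 5 from rfl,
        show (Fin.succ (5:Fin 6) : Fin 7) = 6 from rfl,
        show (Fin.succ (0:Fin 7) : Fin 8) = 1 from rfl,
        show (Fin.succ (1:Fin 7) : Fin 8) = 2 from rfl,
        show (Fin.succ (2:Fin 7) : Fin 8) = 3 from rfl,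
        show (Fin.succ (3:Fin 7) : Fin 8) = 4 from rfl,
        show (Fin.succ (4:Fin 7) : Fin 8) = 5 from rfl,
        show (Fin.succ (5:Fin 7) : Fin 8) = 6 from rfl,
        show (Fin.succ (6:Fin 7) : Fin 8) = 7 from rfl,
        show (Fin.succ (0:Fin 8) : Fin 9) = 1 from rfl,
        show (Fin.succ (1:Fin 8) : Fin 9) = 2 from rfl,
        show (Fin.succ (2:Fin 8) : Fin 9) = 3 from rfl,
        show (Fin.succ (3:Fin 8) : Fin 9) = 4 from rfl,
        show (Fin.succ (4:Fin 8) : Fin 9) = 5 from rfl,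
        show (Fin.succ (5:Fin 8) : Fin 9) = 6 from rfl,
        show (Fin.succ (6:Fin 8) : Fin 9) = 7 from rfl,
        show (Fin.succ (7:Fin 8) : Fin 9) = 8 from rfl,
        show (Fin.succ (0:Fin 9) : Fin 10) = 1 from rfl,
        show (Fin.succ (1:Fin 9) : Fin 10) = 2 from rfl,
        show (Fin.succ (2:Fin 9) : Fin 10) = 3 from rfl,
        show (Fin.succ (3:Fin 9) : Fin 10) = 4 from rfl,
        show (Fin.succ (4:Fin 9) : Fin 10) = 5 from rfl,
        show (Fin.succ (5:Fin 9) : Fin 10) = 6 from rfl,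
        show (Fin.succ (6:Fin 9) : Fin 10) = 7 from rfl,
        show (Fin.succ (7:Fin 9) : Fin 10) = 8 from rfl,
        show (Fin.succ (8:Fin 9) : Fin 10) = 9 from rfl,
        show (Fin.succ (0:Fin 10) : Fin 11) = 1 from rfl,
        show (Fin.succ (1:Fin 10) : Fin 11) = 2 from rfl,
        show (Fin.succ (2:Fin 10) : Fin 11) = 3 from rfl,
        show (Fin.succ (3:Fin 10) : Fin 11) = 4 from rfl,
        show (Fin.succ (4:Fin 10) : Fin 11) = 5 from rfl,
        show (Fin.succ (5:Fin 10) : Fin 11) = 6 from rfl,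
        show (Fin.succ (6:Fin 10) : Fin 11) = 7 from rfl,
        show (Fin.succ (7:Fin 10) : Fin 11) = 8 from rfl,
        show (Fin.succ (8:Fin 10) : Fin 11) = 9 from rfl,
        show (Fin.succ (9:Fin 10) : Fin 11) = 10 from rfl] <;> ring)
  rw [hA]
  simp [q, Fin.sum_univ_succ,
        show (Fin.succ (0:Fin 1) : Fin 2) = 1 from rfl,
        show (Fin.succ (0:Fin 2) : Fin 3) = 1 from rfl,
        show (Fin.succ (1:Fin 2) : Fin 3) = 2 from rfl,
        show (Fin.succ (0:Fin 3) : Fin 4) = 1 from rfl,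
        show (Fin.succ (1:Fin 3) : Fin 4) = 2 from rfl,
        show (Fin.succ (2:Fin 3) : Fin 4) = 3 from rfl,
        show (Fin.succ (0:Fin 4) : Fin 5) = 1 from rfl,
        show (Fin.succ (1:Fin 4) : Fin 5) = 2 from rfl,
        show (Fin.succ (2:Fin 4) : Fin 5) = 3 from rfl,
        show (Fin.succ (3:Fin 4) : Fin 5) = 4 from rfl,
        show (Fin.succ (0:Fin 5) : Fin 6) = 1 from rfl,
        show (Fin.succ (1:Fin 5) : Fin 6) = 2 from rfl,
        show (Fin.succ (2:Fin 5) : Fin 6) = 3 from rfl,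
        show (Fin.succ (3:Fin 5) : Fin 6) = 4 from rfl,
        show (Fin.succ (4:Fin 5) : Fin 6) = 5 from rfl,
        show (Fin.succ (0:Fin 6) : Fin 7) = 1 from rfl,
        show (Fin.succ (1:Fin 6) : Fin 7) = 2 from rfl,
        show (Fin.succ (2:Fin 6) : Fin 7) = 3 from rfl,
        show (Fin.succ (3:Fin 6) : Fin 7) = 4 from rfl,
        show (Fin.succ (4:Fin 6) : Fin 7) = 5 from rfl,
        show (Fin.succ (5:Fin 6) : Fin 7) = 6 from rfl,
        show (Fin.succ (0:Fin 7) : Fin 8) = 1 from rfl,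
        show (Fin.succ (1:Fin 7) : Fin 8) = 2 from rfl,
        show (Fin.succ (2:Fin 7) : Fin 8) = 3 from rfl,
        show (Fin.succ (3:Fin 7) : Fin 8) = 4 from rfl,
        show (Fin.succ (4:Fin 7) : Fin 8) = 5 from rfl,
        show (Fin.succ (5:Fin 7) : Fin 8) = 6 from rfl,
        show (Fin.succ (6:Fin 7) : Fin 8) = 7 from rfl,
        show (Fin.succ (0:Fin 8) : Fin 9) = 1 from rfl,
        show (Fin.succ (1:Fin 8) : Fin 9) = 2 from rfl,
        show (Fin.succ (2:Fin 8) : Fin 9) = 3 from rfl,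
        show (Fin.succ (3:Fin 8) : Fin 9) = 4 from rfl,
        show (Fin.succ (4:Fin 8) : Fin 9) = 5 from rfl,
        show (Fin.succ (5:Fin 8) : Fin 9) = 6 from rfl,
        show (Fin.succ (6:Fin 8) : Fin 9) = 7 from rfl,
        show (Fin.succ (7:Fin 8) : Fin 9) = 8 from rfl,
        show (Fin.succ (0:Fin 9) : Fin 10) = 1 from rfl,
        show (Fin.succ (1:Fin 9) : Fin 10) = 2 from rfl,
        show (Fin.succ (2:Fin 9) : Fin 10) = 3 from rfl,
        show (Fin.succ (3:Fin 9) : Fin 10) = 4 from rfl,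
        show (Fin.succ (4:Fin 9) : Fin 10) = 5 from rfl,
        show (Fin.succ (5:Fin 9) : Fin 10) = 6 from rfl,
        show (Fin.succ (6:Fin 9) : Fin 10) = 7 from rfl,
        show (Fin.succ (7:Fin 9) : Fin 10) = 8 from rfl,
        show (Fin.succ (8:Fin 9) : Fin 10) = 9 from rfl,
        show (Fin.succ (0:Fin 10) : Fin 11) = 1 from rfl,
        show (Fin.succ (1:Fin 10) : Fin 11) = 2 from rfl,
        show (Fin.succ (2:Fin 10) : Fin 11) = 3 from rfl,
        show (Fin.succ (3:Fin 10) : Fin 11) = 4 from rfl,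
        show (Fin.succ (4:Fin 10) : Fin 11) = 5 from rfl,
        show (Fin.succ (5:Fin 10) : Fin 11) = 6 from rfl,
        show (Fin.succ (6:Fin 10) : Fin 11) = 7 from rfl,
        show (Fin.succ (7:Fin 10) : Fin 11) = 8 from rfl,
        show (Fin.succ (8:Fin 10) : Fin 11) = 9 from rfl,
        show (Fin.succ (9:Fin 10) : Fin 11) = 10 from rfl]
  ring
end

section
/- The matrix T as above has no eigenvalue that is a root of unity other than 1. -/
open Matrix

/-- The matrix `T`, viewed as a complex matrix. -/
noncomputable def Tc : Matrix (Fin 11) (Fin 11) ℂ := T.map (algebraMap ℝ ℂ)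

section helpers

variable {α : Type*} (a₀ a₁ a₂ a₃ a₄ a₅ a₆ a₇ a₈ a₉ a₁₀ : α)

lemma vec11_0 : ![a₀,a₁,a₂,a₃,a₄,a₅,a₆,a₇,a₈,a₉,a₁₀] (0 : Fin 11) = a₀ := rfl
lemma vec11_1 : ![a₀,a₁,a₂,a₃,a₄,a₅,a₆,a₇,a₈,a₉,a₁₀] (1 : Fin 11) = a₁ := rfl
lemma vec11_2 : ![a₀,a₁,a₂,a₃,a₄,a₅,a₆,a₇,a₈,a₉,a₁₀] (2 : Fin 11) = a₂ := rfl
lemma vec11_3 : ![a₀,a₁,a₂,a₃,a₄,a₅,a₆,a₇,a₈,a₉,a₁₀] (3 : Fin 11) = a₃ := rfl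
lemma vec11_4 : ![a₀,a₁,a₂,a₃,a₄,a₅,a₆,a₇,a₈,a₉,a₁₀] (4 : Fin 11) = a₄ := rfl
lemma vec11_5 : ![a₀,a₁,a₂,a₃,a₄,a₅,a₆,a₇,a₈,a₉,a₁₀] (5 : Fin 11) = a₅ := rfl
lemma vec11_6 : ![a₀,a₁,a₂,a₃,a₄,a₅,a₆,a₇,a₈,a₉,a₁₀] (6 : Fin 11) = a₆ := rfl
lemma vec11_7 : ![a₀,a₁,a₂,a₃,a₄,a₅,a₆,a₇,a₈,a₉,a₁₀] (7 : Fin 11) = a₇ := rfl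
lemma vec11_8 : ![a₀,a₁,a₂,a₃,a₄,a₅,a₆,a₇,a₈,a₉,a₁₀] (8 : Fin 11) = a₈ := rfl
lemma vec11_9 : ![a₀,a₁,a₂,a₃,a₄,a₅,a₆,a₇,a₈,a₉,a₁₀] (9 : Fin 11) = a₉ := rfl
lemma vec11_10 : ![a₀,a₁,a₂,a₃,a₄,a₅,a₆,a₇,a₈,a₉,a₁₀] (10 : Fin 11) = a₁₀ := rfl

end helpers

lemma sum11 {α : Type*} [AddCommMonoid α] (f : Fin 11 → α) :
    ∑ j, f j = f 0 + (f 1 + (f 2 + (f 3 + (f 4 + (f 5 + (f 6 + (f 7 +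
      (f 8 + (f 9 + f 10))))))))) := by
  simp [Fin.sum_univ_succ]

lemma A_eq_s6 : A = !![2,1,1,1,0,0,0,0,0,0,0;
 -1,0,-1,-1,0,0,0,0,0,0,0;
 -1,-1,0,-1,0,0,0,0,0,0,0;
 -1,-1,-1,0,0,0,0,0,0,0,0;
 0,0,0,0,1,0,0,0,0,0,0;
 0,0,0,0,0,1,0,0,0,0,0;
 0,0,0,0,0,0,1,0,0,0,0;
 0,0,0,0,0,0,0,1,0,0,0;
 0,0,0,0,0,0,0,0,1,0,0;
 0,0,0,0,0,0,0,0,0,1,0;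
 0,0,0,0,0,0,0,0,0,0,1] := by
  ext i j; fin_cases i <;> fin_cases j <;> rfl

lemma B_eq : B = !![1,0,0,0,0,0,0,0,0,0,0;
 0,0,1,0,0,0,0,0,0,0,0;
 0,0,0,1,0,0,0,0,0,0,0;
 0,0,0,0,1,0,0,0,0,0,0;
 0,0,0,0,0,1,0,0,0,0,0;
 0,0,0,0,0,0,1,0,0,0,0;
 0,0,0,0,0,0,0,1,0,0,0;
 0,0,0,0,0,0,0,0,1,0,0;
 0,0,0,0,0,0,0,0,0,1,0;
 0,0,0,0,0,0,0,0,0,0,1;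
 0,1,0,0,0,0,0,0,0,0,0] := by
  ext i j; fin_cases i <;> fin_cases j <;> rfl

/-- Any eigenvalue of `Tc` is a root of `X^11 - X^9 - X^8 + X^3 + X^2 - 1`. -/
lemma eigenvalue_root (z : ℂ) (hz : z ∈ spectrum ℂ Tc) :
    z ^ 11 - z ^ 9 - z ^ 8 + z ^ 3 + z ^ 2 - 1 = 0 := by
  rw [spectrum.mem_iff, Matrix.isUnit_iff_isUnit_det, isUnit_iff_ne_zero, not_not] at hz
  obtain ⟨v, hv0, hv⟩ := (Matrix.exists_mulVec_eq_zero_iff).mpr hz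
  have hmv : Tc.mulVec v = z • v := by
    rw [Matrix.sub_mulVec, Algebra.algebraMap_eq_smul_one, Matrix.smul_mulVec,
      Matrix.one_mulVec, sub_eq_zero] at hv
    exact hv.symm
  have key : ∀ i, ∑ j, (((!![2,1,1,1,0,0,0,0,0,0,0;
     -1,0,-1,-1,0,0,0,0,0,0,0;
     -1,-1,0,-1,0,0,0,0,0,0,0;
     -1,-1,-1,0,0,0,0,0,0,0,0;
     0,0,0,0,1,0,0,0,0,0,0;
     0,0,0,0,0,1,0,0,0,0,0;
     0,0,0,0,0,0,1,0,0,0,0;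
     0,0,0,0,0,0,0,1,0,0,0;
     0,0,0,0,0,0,0,0,1,0,0;
     0,0,0,0,0,0,0,0,0,1,0;
     0,0,0,0,0,0,0,0,0,0,1] : Matrix (Fin 11) (Fin 11) ℝ) *
     !![1,0,0,0,0,0,0,0,0,0,0;
     0,0,1,0,0,0,0,0,0,0,0;
     0,0,0,1,0,0,0,0,0,0,0;
     0,0,0,0,1,0,0,0,0,0,0;
     0,0,0,0,0,1,0,0,0,0,0;
     0,0,0,0,0,0,1,0,0,0,0;
     0,0,0,0,0,0,0,1,0,0,0;
     0,0,0,0,0,0,0,0,1,0,0;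
     0,0,0,0,0,0,0,0,0,1,0;
     0,0,0,0,0,0,0,0,0,0,1;
     0,1,0,0,0,0,0,0,0,0,0]).map (algebraMap ℝ ℂ)) i j * v j = z * v i := by
    intro i
    have h := congrFun hmv i
    rw [show Tc = (A * B).map (algebraMap ℝ ℂ) from rfl, A_eq_s6, B_eq] at h
    simpa [Matrix.mulVec, dotProduct] using h
  have e0 : (2 - z) * v 0 + v 2 + v 3 + v 4 = 0 := by
    have h := key 0
    simp only [Matrix.map_apply, Matrix.mul_apply, Matrix.of_apply, sum11,
      vec11_0, vec11_1, vec11_2, vec11_3, vec11_4, vec11_5, vec11_6, vec11_7,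
      vec11_8, vec11_9, vec11_10] at h
    push_cast at h
    linear_combination h
  have e1 : -(v 0) - v 3 - v 4 - z * v 1 = 0 := by
    have h := key 1
    simp only [Matrix.map_apply, Matrix.mul_apply, Matrix.of_apply, sum11,
      vec11_0, vec11_1, vec11_2, vec11_3, vec11_4, vec11_5, vec11_6, vec11_7,
      vec11_8, vec11_9, vec11_10] at h
    push_cast at h
    linear_combination h
  have e2 : -(v 0) - v 2 - v 4 - z * v 2 = 0 := by
    have h := key 2
    simp only [Matrix.map_apply, Matrix.mul_apply, Matrix.of_apply, sum11,
      vec11_0, vec11_1, vec11_2, vec11_3, vec11_4, vec11_5, vec11_6, vec11_7,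
      vec11_8, vec11_9, vec11_10] at h
    push_cast at h
    linear_combination h
  have e3 : -(v 0) - v 2 - v 3 - z * v 3 = 0 := by
    have h := key 3
    simp only [Matrix.map_apply, Matrix.mul_apply, Matrix.of_apply, sum11,
      vec11_0, vec11_1, vec11_2, vec11_3, vec11_4, vec11_5, vec11_6, vec11_7,
      vec11_8, vec11_9, vec11_10] at h
    push_cast at h
    linear_combination h
  have e4 : v 5 - z * v 4 = 0 := by
    have h := key 4
    simp only [Matrix.map_apply, Matrix.mul_apply, Matrix.of_apply, sum11,
      vec11_0, vec11_1, vec11_2, vec11_3, vec11_4, vec11_5, vec11_6, vec11_7,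
      vec11_8, vec11_9, vec11_10] at h
    push_cast at h
    linear_combination h
  have e5 : v 6 - z * v 5 = 0 := by
    have h := key 5
    simp only [Matrix.map_apply, Matrix.mul_apply, Matrix.of_apply, sum11,
      vec11_0, vec11_1, vec11_2, vec11_3, vec11_4, vec11_5, vec11_6, vec11_7,
      vec11_8, vec11_9, vec11_10] at h
    push_cast at h
    linear_combination h
  have e6 : v 7 - z * v 6 = 0 := by
    have h := key 6
    simp only [Matrix.map_apply, Matrix.mul_apply, Matrix.of_apply, sum11,
      vec11_0, vec11_1, vec11_2, vec11_3, vec11_4, vec11_5, vec11_6, vec11_7,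
      vec11_8, vec11_9, vec11_10] at h
    push_cast at h
    linear_combination h
  have e7 : v 8 - z * v 7 = 0 := by
    have h := key 7
    simp only [Matrix.map_apply, Matrix.mul_apply, Matrix.of_apply, sum11,
      vec11_0, vec11_1, vec11_2, vec11_3, vec11_4, vec11_5, vec11_6, vec11_7,
      vec11_8, vec11_9, vec11_10] at h
    push_cast at h
    linear_combination h
  have e8 : v 9 - z * v 8 = 0 := by
    have h := key 8
    simp only [Matrix.map_apply, Matrix.mul_apply, Matrix.of_apply, sum11,
      vec11_0, vec11_1, vec11_2, vec11_3, vec11_4, vec11_5, vec11_6, vec11_7,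
      vec11_8, vec11_9, vec11_10] at h
    push_cast at h
    linear_combination h
  have e9 : v 10 - z * v 9 = 0 := by
    have h := key 9
    simp only [Matrix.map_apply, Matrix.mul_apply, Matrix.of_apply, sum11,
      vec11_0, vec11_1, vec11_2, vec11_3, vec11_4, vec11_5, vec11_6, vec11_7,
      vec11_8, vec11_9, vec11_10] at h
    push_cast at h
    linear_combination h
  have e10 : v 1 - z * v 10 = 0 := by
    have h := key 10
    simp only [Matrix.map_apply, Matrix.mul_apply, Matrix.of_apply, sum11,
      vec11_0, vec11_1, vec11_2, vec11_3, vec11_4, vec11_5, vec11_6, vec11_7,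
      vec11_8, vec11_9, vec11_10] at h
    push_cast at h
    linear_combination h
  have hv1 : v 1 - z^7 * v 4 = 0 := by
    linear_combination e10 + z*e9 + z^2*e8 + z^3*e7 + z^4*e6 + z^5*e5 + z^6*e4
  have f2 : v 0 + v 3 + (1 + z^8) * v 4 = 0 := by
    linear_combination -e1 - z*hv1
  have f3 : v 0 + (1+z) * v 2 + v 4 = 0 := by linear_combination -e2
  have f4 : v 0 + v 2 + (1+z) * v 3 = 0 := by linear_combination -e3
  have hD0 : (1 - z^2 - z^3 + z^8 + z^9 - z^11) * v 0 = 0 := by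
    linear_combination (2+2*z+z^2+z^8+2*z^9+z^10)*e0 + (-1-z-z^2)*f2 + (-1-z-z^9)*f3 +
      (-1-z^8-z^9)*f4
  have hD2 : (1 - z^2 - z^3 + z^8 + z^9 - z^11) * v 2 = 0 := by
    linear_combination (-1-z^8-z^9)*e0 + (z^2)*f2 + (1-z^2+z^8+z^9-z^10)*f3 + (1-z+z^8)*f4
  have hD3 : (1 - z^2 - z^3 + z^8 + z^9 - z^11) * v 3 = 0 := by
    linear_combination (-1-z-z^9)*e0 + f2 + (z-z^8+z^9)*f3 + (1-z^2+z^8+z^9-z^10)*f4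
  have hD4 : (1 - z^2 - z^3 + z^8 + z^9 - z^11) * v 4 = 0 := by
    linear_combination (-1-z-z^2)*e0 + (1+z-z^3)*f2 + f3 + (z^2)*f4
  have hD5 : (1 - z^2 - z^3 + z^8 + z^9 - z^11) * v 5 = 0 := by
    linear_combination (1 - z^2 - z^3 + z^8 + z^9 - z^11) * e4 + z * hD4
  have hD6 : (1 - z^2 - z^3 + z^8 + z^9 - z^11) * v 6 = 0 := by
    linear_combination (1 - z^2 - z^3 + z^8 + z^9 - z^11) * e5 + z * hD5
  have hD7 : (1 - z^2 - z^3 + z^8 + z^9 - z^11) * v 7 = 0 := by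
    linear_combination (1 - z^2 - z^3 + z^8 + z^9 - z^11) * e6 + z * hD6
  have hD8 : (1 - z^2 - z^3 + z^8 + z^9 - z^11) * v 8 = 0 := by
    linear_combination (1 - z^2 - z^3 + z^8 + z^9 - z^11) * e7 + z * hD7
  have hD9 : (1 - z^2 - z^3 + z^8 + z^9 - z^11) * v 9 = 0 := by
    linear_combination (1 - z^2 - z^3 + z^8 + z^9 - z^11) * e8 + z * hD8
  have hD10 : (1 - z^2 - z^3 + z^8 + z^9 - z^11) * v 10 = 0 := by
    linear_combination (1 - z^2 - z^3 + z^8 + z^9 - z^11) * e9 + z * hD9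
  have hD1 : (1 - z^2 - z^3 + z^8 + z^9 - z^11) * v 1 = 0 := by
    linear_combination (1 - z^2 - z^3 + z^8 + z^9 - z^11) * hv1 + z^7 * hD4
  have hD : (1 - z^2 - z^3 + z^8 + z^9 - z^11) = 0 := by
    obtain ⟨i, hi⟩ := Function.ne_iff.mp hv0
    fin_cases i
    · exact (mul_eq_zero.mp hD0).resolve_right hi
    · exact (mul_eq_zero.mp hD1).resolve_right hi
    · exact (mul_eq_zero.mp hD2).resolve_right hi
    · exact (mul_eq_zero.mp hD3).resolve_right hi
    · exact (mul_eq_zero.mp hD4).resolve_right hi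
    · exact (mul_eq_zero.mp hD5).resolve_right hi
    · exact (mul_eq_zero.mp hD6).resolve_right hi
    · exact (mul_eq_zero.mp hD7).resolve_right hi
    · exact (mul_eq_zero.mp hD8).resolve_right hi
    · exact (mul_eq_zero.mp hD9).resolve_right hi
    · exact (mul_eq_zero.mp hD10).resolve_right hi
  linear_combination -hD

lemma zmod_two_ne_zero : (2 : ZMod 1291) ≠ 0 := by decide

lemma zmod_two_pow_thirty : (2 : ZMod 1291)^(30:ℕ) ≠ 1 := by decide

/-- `T` has no (complex) eigenvalue that is a root of unity other than `1`. -/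
theorem T_no_root_of_unity_eigenvalue_except_one :
    ∀ z : ℂ, z ∈ spectrum ℂ Tc → (∃ n : ℕ, 0 < n ∧ z ^ n = 1) → z = 1 := by
  intro z hz hroot
  obtain ⟨n, hn, hzn⟩ := hroot
  have hD := eigenvalue_root z hz
  by_contra hne
  have hfin : IsOfFinOrder z := isOfFinOrder_iff_pow_eq_one.mpr ⟨n, hn, hzn⟩
  set m := orderOf z with hm_def
  have hm : 0 < m := hfin.orderOf_pos
  have hm1 : m ≠ 1 := fun h => hne (by rwa [orderOf_eq_one_iff] at h)
  have hm2 : 1 < m := by omega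
  have hprim : IsPrimitiveRoot z m := IsPrimitiveRoot.orderOf z
  set P : Polynomial ℤ := Polynomial.X^11 - Polynomial.X^9 - Polynomial.X^8 +
    Polynomial.X^3 + Polynomial.X^2 - 1 with hP_def
  have hPz : Polynomial.aeval z P = 0 := by
    simp only [hP_def, map_sub, map_add, map_pow, Polynomial.aeval_X, _root_.map_one]
    linear_combination hD
  have hPmonic : P.Monic := by
    rw [hP_def]; monicity!
  have hPdeg : P.natDegree = 11 := by rw [hP_def]; compute_degree!
  have hint : IsIntegral ℤ z := ⟨P, hPmonic, by rwa [← Polynomial.aeval_def]⟩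
  have hcyc : Polynomial.cyclotomic m ℤ = minpoly ℤ z :=
    Polynomial.cyclotomic_eq_minpoly hprim hm
  have hdvd : Polynomial.cyclotomic m ℤ ∣ P := by
    rw [hcyc]; exact minpoly.isIntegrallyClosed_dvd hint hPz
  have hφ : m.totient ≤ 11 := by
    have h1 := Polynomial.natDegree_le_of_dvd hdvd hPmonic.ne_zero
    rwa [Polynomial.natDegree_cyclotomic, hPdeg] at h1
  have hP2 : P.eval 2 = 1291 := by rw [hP_def]; simp
  have heval : (Polynomial.cyclotomic m ℤ).eval 2 ∣ 1291 := by
    obtain ⟨Q, hQ⟩ := hdvd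
    exact ⟨Q.eval 2, by rw [← hP2, hQ, Polynomial.eval_mul]⟩
  have hpos : 0 < (Polynomial.cyclotomic m ℤ).eval 2 :=
    Polynomial.cyclotomic_pos' m (by norm_num)
  have hgt : 1 < ((Polynomial.cyclotomic m ℤ).eval 2).natAbs := by
    have h := Polynomial.sub_one_lt_natAbs_cyclotomic_eval hm2 (by norm_num : (2:ℕ) ≠ 1)
    simpa using h
  have he1291 : (Polynomial.cyclotomic m ℤ).eval 2 = 1291 := by
    have hd : ((Polynomial.cyclotomic m ℤ).eval 2).natAbs ∣ 1291 := by
      have h := Int.natAbs_dvd_natAbs.mpr heval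
      simpa using h
    rcases (by norm_num : Nat.Prime 1291).eq_one_or_self_of_dvd _ hd with h | h <;> omega
  have hdvd2 : (1291:ℤ) ∣ 2^m - 1 := by
    obtain ⟨R, hR⟩ := Polynomial.cyclotomic.dvd_X_pow_sub_one m ℤ
    refine ⟨R.eval 2, ?_⟩
    have h := congrArg (Polynomial.eval (2:ℤ)) hR
    simp only [Polynomial.eval_mul, Polynomial.eval_sub, Polynomial.eval_pow,
      Polynomial.eval_X, Polynomial.eval_one] at h
    rw [h, he1291]
  haveI : Fact (Nat.Prime 1291) := ⟨by norm_num⟩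
  have h2m : (2 : ZMod 1291)^m = 1 := by
    have h0 : ((2^m - 1 : ℤ) : ZMod 1291) = 0 :=
      (ZMod.intCast_zmod_eq_zero_iff_dvd _ _).mpr hdvd2
    push_cast at h0
    linear_combination h0
  set d := orderOf (2 : ZMod 1291) with hd_def
  have hdm : d ∣ m := orderOf_dvd_of_pow_eq_one h2m
  have hd1290 : d ∣ 1290 := by
    have h1 : (2 : ZMod 1291) ≠ 0 := zmod_two_ne_zero
    have h2 := ZMod.pow_card_sub_one_eq_one h1
    exact orderOf_dvd_of_pow_eq_one (by norm_num at h2 ⊢; exact h2)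
  by_cases h43 : 43 ∣ d
  · have h43m : (43:ℕ) ∣ m := h43.trans hdm
    have ht : Nat.totient 43 ∣ Nat.totient m := Nat.totient_dvd_of_dvd h43m
    rw [Nat.totient_prime (by norm_num)] at ht
    have h42 : 42 ≤ m.totient := Nat.le_of_dvd (Nat.totient_pos.mpr hm) ht
    omega
  · have hcop : Nat.Coprime d 43 :=
      ((Nat.Prime.coprime_iff_not_dvd (by norm_num)).mpr h43).symm
    have hd30 : d ∣ 30 := by
      refine hcop.dvd_of_dvd_mul_right ?_
      rw [show 30*43 = 1290 from rfl]
      exact hd1290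
    obtain ⟨k, hk⟩ := hd30
    have h230 : (2 : ZMod 1291)^30 = 1 := by
      rw [hk, pow_mul, hd_def, pow_orderOf_eq_one, one_pow]
    have hne230 : (2 : ZMod 1291)^(30:ℕ) ≠ 1 := zmod_two_pow_thirty
    exact hne230 h230
end

section
/- Let λ > 1 be the leading eigenvalue of the matrix T from Lesieutre's construction, and let C_λ = (1, -r1, ..., -r10) be a corresponding eigenvector normalized with first coordinate 1 (i.e. C_λ = H - Σ r_i E_i). Then r1 + r2 + r3 > 1. -/
open Matrix

lemma hA' : A = !![2, 1, 1, 1, 0, 0, 0, 0, 0, 0, 0;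
 -1, 0, -1, -1, 0, 0, 0, 0, 0, 0, 0;
 -1, -1, 0, -1, 0, 0, 0, 0, 0, 0, 0;
 -1, -1, -1, 0, 0, 0, 0, 0, 0, 0, 0;
 0, 0, 0, 0, 1, 0, 0, 0, 0, 0, 0;
 0, 0, 0, 0, 0, 1, 0, 0, 0, 0, 0;
 0, 0, 0, 0, 0, 0, 1, 0, 0, 0, 0;
 0, 0, 0, 0, 0, 0, 0, 1, 0, 0, 0;
 0, 0, 0, 0, 0, 0, 0, 0, 1, 0, 0;
 0, 0, 0, 0, 0, 0, 0, 0, 0, 1, 0;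
 0, 0, 0, 0, 0, 0, 0, 0, 0, 0, 1] := by
  ext i j; fin_cases i <;> fin_cases j <;> rfl

lemma hB' : B = !![1, 0, 0, 0, 0, 0, 0, 0, 0, 0, 0;
 0, 0, 1, 0, 0, 0, 0, 0, 0, 0, 0;
 0, 0, 0, 1, 0, 0, 0, 0, 0, 0, 0;
 0, 0, 0, 0, 1, 0, 0, 0, 0, 0, 0;
 0, 0, 0, 0, 0, 1, 0, 0, 0, 0, 0;
 0, 0, 0, 0, 0, 0, 1, 0, 0, 0, 0;
 0, 0, 0, 0, 0, 0, 0, 1, 0, 0, 0;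
 0, 0, 0, 0, 0, 0, 0, 0, 1, 0, 0;
 0, 0, 0, 0, 0, 0, 0, 0, 0, 1, 0;
 0, 0, 0, 0, 0, 0, 0, 0, 0, 0, 1;
 0, 1, 0, 0, 0, 0, 0, 0, 0, 0, 0] := by
  ext i j; fin_cases i <;> fin_cases j <;> rfl

set_option maxHeartbeats 1000000 in
/-- If `λ > 1` is the leading eigenvalue of `T` and `C_λ = (1, -r₁, …, -r₁₀)` (that is,
`C_λ = H - ∑ rᵢEᵢ`) is a corresponding eigenvector normalized with first coordinate `1`,
then `r₁ + r₂ + r₃ > 1`. -/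
theorem leading_eigenvector_sum_gt_one (lam : ℝ) (r : Fin 10 → ℝ) (Clam : Fin 11 → ℝ)
    (hClam : Clam = Fin.cons 1 (fun i => -(r i)))
    (hlam : 1 < lam)
    (heig : T.mulVec Clam = lam • Clam) :
    1 < r 0 + r 1 + r 2 := by
  have hC : Clam = ![1, -r 0, -r 1, -r 2, -r 3, -r 4, -r 5, -r 6, -r 7, -r 8, -r 9] := by
    subst hClam; ext i; fin_cases i <;> rfl
  have hT : T = A * B := rfl
  rw [hT, hA', hB', hC, ← Matrix.mulVec_mulVec] at heig
  have hw : (!![(1:ℝ), 0, 0, 0, 0, 0, 0, 0, 0, 0, 0;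
 0, 0, 1, 0, 0, 0, 0, 0, 0, 0, 0;
 0, 0, 0, 1, 0, 0, 0, 0, 0, 0, 0;
 0, 0, 0, 0, 1, 0, 0, 0, 0, 0, 0;
 0, 0, 0, 0, 0, 1, 0, 0, 0, 0, 0;
 0, 0, 0, 0, 0, 0, 1, 0, 0, 0, 0;
 0, 0, 0, 0, 0, 0, 0, 1, 0, 0, 0;
 0, 0, 0, 0, 0, 0, 0, 0, 1, 0, 0;
 0, 0, 0, 0, 0, 0, 0, 0, 0, 1, 0;
 0, 0, 0, 0, 0, 0, 0, 0, 0, 0, 1;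
 0, 1, 0, 0, 0, 0, 0, 0, 0, 0, 0]).mulVec
      ![1, -r 0, -r 1, -r 2, -r 3, -r 4, -r 5, -r 6, -r 7, -r 8, -r 9]
      = ![1, -r 1, -r 2, -r 3, -r 4, -r 5, -r 6, -r 7, -r 8, -r 9, -r 0] := by
    simp only [Matrix.cons_mulVec, Matrix.cons_dotProduct, Matrix.dotProduct_of_isEmpty,
      Matrix.empty_mulVec, Matrix.cons_val_zero, Matrix.cons_val_one, Matrix.head_cons]
    ext i
    fin_cases i <;> norm_num
  rw [hw] at heig
  have hA2 : (!![(2:ℝ), 1, 1, 1, 0, 0, 0, 0, 0, 0, 0;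
 -1, 0, -1, -1, 0, 0, 0, 0, 0, 0, 0;
 -1, -1, 0, -1, 0, 0, 0, 0, 0, 0, 0;
 -1, -1, -1, 0, 0, 0, 0, 0, 0, 0, 0;
 0, 0, 0, 0, 1, 0, 0, 0, 0, 0, 0;
 0, 0, 0, 0, 0, 1, 0, 0, 0, 0, 0;
 0, 0, 0, 0, 0, 0, 1, 0, 0, 0, 0;
 0, 0, 0, 0, 0, 0, 0, 1, 0, 0, 0;
 0, 0, 0, 0, 0, 0, 0, 0, 1, 0, 0;
 0, 0, 0, 0, 0, 0, 0, 0, 0, 1, 0;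
 0, 0, 0, 0, 0, 0, 0, 0, 0, 0, 1]).mulVec
      ![1, -r 1, -r 2, -r 3, -r 4, -r 5, -r 6, -r 7, -r 8, -r 9, -r 0]
      = ![2 - r 1 - r 2 - r 3, -1 + r 2 + r 3, -1 + r 1 + r 3, -1 + r 1 + r 2,
          -r 4, -r 5, -r 6, -r 7, -r 8, -r 9, -r 0] := by
    simp only [Matrix.cons_mulVec, Matrix.cons_dotProduct, Matrix.dotProduct_of_isEmpty,
      Matrix.empty_mulVec, Matrix.cons_val_zero, Matrix.cons_val_one, Matrix.head_cons]
    ext i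
    fin_cases i <;> norm_num <;> ring
  rw [hA2] at heig
  have E0 : 2 - r 1 - r 2 - r 3 = lam * 1 := congrFun heig 0
  have E1 : -1 + r 2 + r 3 = lam * -r 0 := congrFun heig 1
  have E2 : -1 + r 1 + r 3 = lam * -r 1 := congrFun heig 2
  have E3 : -1 + r 1 + r 2 = lam * -r 2 := congrFun heig 3
  have E4 : -r 4 = lam * -r 3 := congrFun heig 4
  have E5 : -r 5 = lam * -r 4 := congrFun heig 5
  have E6 : -r 6 = lam * -r 5 := congrFun heig 6
  have E7 : -r 7 = lam * -r 6 := congrFun heig 7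
  have E8 : -r 8 = lam * -r 7 := congrFun heig 8
  have E9 : -r 9 = lam * -r 8 := congrFun heig 9
  have E10 : -r 0 = lam * -r 9 := congrFun heig 10
  have hr1 : (lam^2+lam+1) * r 1 = lam^2 := by
    linear_combination (lam+1)*E0 + (lam+1)*E2 + E3
  have hr2 : (lam^2+lam+1) * r 2 = 1 := by
    linear_combination -E0 - E2 + lam*E3
  have hr3 : (lam^2+lam+1) * r 3 = lam + 1 - lam^3 := by
    linear_combination -(lam+1)^2*E0 - lam*E2 - (lam+1)*E3
  have hr0 : r 0 = lam^7 * r 3 := by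
    linear_combination -E10 - lam*E9 - lam^2*E8 - lam^3*E7 - lam^4*E6 - lam^5*E5 - lam^6*E4
  have heq8 : lam^8 * r 3 = 1 - r 2 - r 3 := by
    linear_combination E1 - lam*hr0
  have hchar : lam^11 - lam^9 - lam^8 + lam^3 + lam^2 - 1 = 0 := by
    linear_combination (-(lam^2+lam+1))*heq8 + lam^8*hr3 + hr2 + hr3
  have hkey : lam * ((lam^2+lam+1) * (r 0 + r 1 + r 2 - 1)) = lam^3 - 1 := by
    linear_combination lam*(lam^2+lam+1)*hr0 + lam*hr1 + lam*hr2 + lam^8*hr3 - hchar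
  have hl0 : (0:ℝ) < lam := by linarith
  have h2 : 0 < lam * (lam^2+lam+1) := by positivity
  have h3 : 0 < lam^3 - 1 := by nlinarith
  nlinarith [hkey, h2, h3]
end

section
/- With t_i as above, for all pairs 1 ≤ i < j ≤ 10, t_i + t_j ≤ 1, and t1 + t2 + t3 = 1. -/
open Matrix

/-- The class `ℓ̄ = H - E₁ - E₂ - E₃`, as the coefficient vector `(1, -1, -1, -1, 0, …, 0)`. -/
def lbar : Fin 11 → ℝ := ![1, -1, -1, -1, 0, 0, 0, 0, 0, 0, 0]

/-- `T` written as an explicit 11 × 11 matrix. -/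
def Texp : Matrix (Fin 11) (Fin 11) ℝ :=
 !![2, 0, 1, 1, 1, 0, 0, 0, 0, 0, 0;
   -1, 0, 0, -1, -1, 0, 0, 0, 0, 0, 0;
   -1, 0, -1, 0, -1, 0, 0, 0, 0, 0, 0;
   -1, 0, -1, -1, 0, 0, 0, 0, 0, 0, 0;
   0, 0, 0, 0, 0, 1, 0, 0, 0, 0, 0;
   0, 0, 0, 0, 0, 0, 1, 0, 0, 0, 0;
   0, 0, 0, 0, 0, 0, 0, 1, 0, 0, 0;
   0, 0, 0, 0, 0, 0, 0, 0, 1, 0, 0;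
   0, 0, 0, 0, 0, 0, 0, 0, 0, 1, 0;
   0, 0, 0, 0, 0, 0, 0, 0, 0, 0, 1;
   0, 1, 0, 0, 0, 0, 0, 0, 0, 0, 0]

theorem T_eq_Texp : T = Texp := by
  have h : T = A.submatrix id σ.symm := PEquiv.mul_toMatrix_toPEquiv A σ
  rw [h]; ext i j; fin_cases i <;> fin_cases j <;> rfl

set_option maxHeartbeats 1000000 in
/-- With `L = H - ∑ tᵢEᵢ` as in Lesieutre's construction: for all pairs `i < j` one has
`tᵢ + tⱼ ≤ 1`, and `t₁ + t₂ + t₃ = 1`. -/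
theorem t_pair_sums (lam : ℝ) (r t : Fin 10 → ℝ) (Clam : Fin 11 → ℝ) (β : ℝ)
    (hClam : Clam = Fin.cons 1 (fun i => -(r i)))
    (hlam : 1 < lam)
    (heig : T.mulVec Clam = lam • Clam)
    (hβ : β = (r 0 + r 1 + r 2 - 1) / 2)
    (hβ1 : β ≠ 1)
    (ht : ∀ i : Fin 10, t i = -((1 / (1 - β)) * (Clam i.succ - β * lbar i.succ))) :
    (∀ i j : Fin 10, i < j → t i + t j ≤ 1) ∧ t 0 + t 1 + t 2 = 1 := by
  have hC : Clam = ![1, -r 0, -r 1, -r 2, -r 3, -r 4, -r 5, -r 6, -r 7, -r 8, -r 9] := by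
    rw [hClam]; ext i; fin_cases i <;> rfl
  rw [T_eq_Texp, hC] at heig
  simp only [Texp, Matrix.cons_mulVec, Matrix.cons_dotProduct, Matrix.dotProduct_of_isEmpty,
    Matrix.smul_cons, Matrix.smul_empty, smul_eq_mul, funext_iff, Fin.forall_fin_succ,
    Matrix.cons_val_zero, Matrix.cons_val_succ, Matrix.head_cons, Matrix.tail_cons,
    IsEmpty.forall_iff, and_true, zero_mul, one_mul, mul_zero, add_zero, zero_add,
    neg_mul, mul_neg, mul_one, neg_neg] at heig
  obtain ⟨e0, e1, e2, e3, e4, e5, e6, e7, e8, e9, e10⟩ := heig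
  -- solve the linear system: r i * d = p_i(lam) with d = lam^2+lam+1
  have hr1 : r 1 * (lam^2+lam+1) = lam^2 := by
    linear_combination (1+lam)*e0 + (1+lam)*e2 + e3
  have hr2 : r 2 * (lam^2+lam+1) = 1 := by
    linear_combination (-(lam^2+lam+1))*(e0 + e2) + lam*hr1
  have hr3 : r 3 * (lam^2+lam+1) = lam+1-lam^3 := by
    linear_combination (lam^2+lam+1)*e2 - (1+lam)*hr1
  have hr4 : r 4 * (lam^2+lam+1) = lam^2+lam^1-lam^4 := by
    linear_combination (-(lam^2+lam+1))*e4 + lam*hr3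
  have hr5 : r 5 * (lam^2+lam+1) = lam^3+lam^2-lam^5 := by
    linear_combination (-(lam^2+lam+1))*e5 + lam*hr4
  have hr6 : r 6 * (lam^2+lam+1) = lam^4+lam^3-lam^6 := by
    linear_combination (-(lam^2+lam+1))*e6 + lam*hr5
  have hr7 : r 7 * (lam^2+lam+1) = lam^5+lam^4-lam^7 := by
    linear_combination (-(lam^2+lam+1))*e7 + lam*hr6
  have hr8 : r 8 * (lam^2+lam+1) = lam^6+lam^5-lam^8 := by
    linear_combination (-(lam^2+lam+1))*e8 + lam*hr7
  have hr9 : r 9 * (lam^2+lam+1) = lam^7+lam^6-lam^9 := by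
    linear_combination (-(lam^2+lam+1))*e9 + lam*hr8
  have hr0 : r 0 * (lam^2+lam+1) = lam^8+lam^7-lam^10 := by
    linear_combination (-(lam^2+lam+1))*e10 + lam*hr9
  have hP : lam^11 - lam^9 - lam^8 + lam^3 + lam^2 - 1 = 0 := by
    linear_combination (-(lam^2+lam+1))*e1 + hr2 + hr3 + lam*hr0
  -- lam ≤ 13/10
  have hub : lam ≤ 13/10 := by
    by_contra hcon
    push_neg at hcon
    have hy : (0:ℝ) ≤ lam - 13/10 := by linarith
    linarith only [hP, pow_nonneg hy 1, pow_nonneg hy 2, pow_nonneg hy 3, pow_nonneg hy 4, pow_nonneg hy 5,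
      pow_nonneg hy 6, pow_nonneg hy 7, pow_nonneg hy 8, pow_nonneg hy 9,
      pow_nonneg hy 10, pow_nonneg hy 11]
  have hy1 : (0:ℝ) ≤ lam - 1 := by linarith
  have hy2 : (0:ℝ) ≤ 13/10 - lam := by linarith
  have F0 : (0:ℝ) ≤ (lam-1)^0 * (13/10-lam)^10 := mul_nonneg (pow_nonneg hy1 0) (pow_nonneg hy2 10)
  have F1 : (0:ℝ) ≤ (lam-1)^1 * (13/10-lam)^9 := mul_nonneg (pow_nonneg hy1 1) (pow_nonneg hy2 9)
  have F2 : (0:ℝ) ≤ (lam-1)^2 * (13/10-lam)^8 := mul_nonneg (pow_nonneg hy1 2) (pow_nonneg hy2 8)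
  have F3 : (0:ℝ) ≤ (lam-1)^3 * (13/10-lam)^7 := mul_nonneg (pow_nonneg hy1 3) (pow_nonneg hy2 7)
  have F4 : (0:ℝ) ≤ (lam-1)^4 * (13/10-lam)^6 := mul_nonneg (pow_nonneg hy1 4) (pow_nonneg hy2 6)
  have F5 : (0:ℝ) ≤ (lam-1)^5 * (13/10-lam)^5 := mul_nonneg (pow_nonneg hy1 5) (pow_nonneg hy2 5)
  have F6 : (0:ℝ) ≤ (lam-1)^6 * (13/10-lam)^4 := mul_nonneg (pow_nonneg hy1 6) (pow_nonneg hy2 4)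
  have F7 : (0:ℝ) ≤ (lam-1)^7 * (13/10-lam)^3 := mul_nonneg (pow_nonneg hy1 7) (pow_nonneg hy2 3)
  have F8 : (0:ℝ) ≤ (lam-1)^8 * (13/10-lam)^2 := mul_nonneg (pow_nonneg hy1 8) (pow_nonneg hy2 2)
  have F9 : (0:ℝ) ≤ (lam-1)^9 * (13/10-lam)^1 := mul_nonneg (pow_nonneg hy1 9) (pow_nonneg hy2 1)
  have F10 : (0:ℝ) ≤ (lam-1)^10 * (13/10-lam)^0 := mul_nonneg (pow_nonneg hy1 10) (pow_nonneg hy2 0)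
  have hKs : (lam^8+lam^7-lam^10) + lam^2 + 1 < 3*(lam^2+lam+1) := by
    linarith only [F0, F1, F2, F3, F4, F5, F6, F7, F8, F9, F10]
  have hK0 : 4*(lam^8+lam^7-lam^10) ≤ (lam^2+lam+1) + (lam^8+lam^7-lam^10) + lam^2 + 1 := by
    linarith only [F0, F1, F2, F3, F4, F5, F6, F7, F8, F9, F10]
  have hK1 : 4*(lam^2) ≤ (lam^2+lam+1) + (lam^8+lam^7-lam^10) + lam^2 + 1 := by
    linarith only [F0, F1, F2, F3, F4, F5, F6, F7, F8, F9, F10]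
  have hK2 : 4*((1:ℝ)) ≤ (lam^2+lam+1) + (lam^8+lam^7-lam^10) + lam^2 + 1 := by
    linarith only [F0, F1, F2, F3, F4, F5, F6, F7, F8, F9, F10]
  have hK3 : 4*(lam+1-lam^3) + (lam^8+lam^7-lam^10) + lam^2 + 1 ≤ 3*(lam^2+lam+1) := by
    linarith only [F0, F1, F2, F3, F4, F5, F6, F7, F8, F9, F10]
  have hK4 : 4*(lam^2+lam^1-lam^4) + (lam^8+lam^7-lam^10) + lam^2 + 1 ≤ 3*(lam^2+lam+1) := by
    linarith only [F0, F1, F2, F3, F4, F5, F6, F7, F8, F9, F10]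
  have hK5 : 4*(lam^3+lam^2-lam^5) + (lam^8+lam^7-lam^10) + lam^2 + 1 ≤ 3*(lam^2+lam+1) := by
    linarith only [F0, F1, F2, F3, F4, F5, F6, F7, F8, F9, F10]
  have hK6 : 4*(lam^4+lam^3-lam^6) + (lam^8+lam^7-lam^10) + lam^2 + 1 ≤ 3*(lam^2+lam+1) := by
    linarith only [F0, F1, F2, F3, F4, F5, F6, F7, F8, F9, F10]
  have hK7 : 4*(lam^5+lam^4-lam^7) + (lam^8+lam^7-lam^10) + lam^2 + 1 ≤ 3*(lam^2+lam+1) := by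
    linarith only [F0, F1, F2, F3, F4, F5, F6, F7, F8, F9, F10]
  have hK8 : 4*(lam^6+lam^5-lam^8) + (lam^8+lam^7-lam^10) + lam^2 + 1 ≤ 3*(lam^2+lam+1) := by
    linarith only [F0, F1, F2, F3, F4, F5, F6, F7, F8, F9, F10]
  have hK9 : 4*(lam^7+lam^6-lam^9) + (lam^8+lam^7-lam^10) + lam^2 + 1 ≤ 3*(lam^2+lam+1) := by
    linarith only [F0, F1, F2, F3, F4, F5, F6, F7, F8, F9, F10]
  have hd : (0:ℝ) < lam^2+lam+1 := by positivity
  have hsum : (r 0 + r 1 + r 2) * (lam^2+lam+1) = (lam^8+lam^7-lam^10) + lam^2 + 1 := by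
    linear_combination hr0 + hr1 + hr2
  have hid : (3 - (r 0 + r 1 + r 2)) * (lam^2+lam+1)
      = 3*(lam^2+lam+1) - ((lam^8+lam^7-lam^10) + lam^2 + 1) := by
    linear_combination -hsum
  have h3sd : 0 < (3 - (r 0 + r 1 + r 2)) * (lam^2+lam+1) := by
    linarith only [hid, hKs]
  have h3s : 0 < 3 - (r 0 + r 1 + r 2) := by
    rcases mul_pos_iff.mp h3sd with ⟨h, _⟩ | ⟨_, h⟩
    · exact h
    · linarith only [h, hd]
  have hβpos : 0 < 1 - β := by rw [hβ]; linarith only [h3s]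
  have hβne : (1:ℝ) - β ≠ 0 := ne_of_gt hβpos
  have ht0 : t 0 * (1 - β) = r 0 - β := by
    rw [ht 0, hClam, show lbar (Fin.succ 0) = -1 from rfl, Fin.cons_succ]
    field_simp
    ring
  have hid0 : ((3 - (r 0 + r 1 + r 2))/2 - 2*(r 0) + (r 0 + r 1 + r 2 - 1)*1) * (2*(lam^2+lam+1)) = 3*(lam^2+lam+1) - ((lam^8+lam^7-lam^10) + lam^2 + 1) - 4*(lam^8+lam^7-lam^10) + 2*(((lam^8+lam^7-lam^10) + lam^2 + 1) - (lam^2+lam+1)) := by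
    linear_combination hsum - 4*hr0
  have hE0 : 0 ≤ ((3 - (r 0 + r 1 + r 2))/2 - 2*(r 0) + (r 0 + r 1 + r 2 - 1)*1) * (2*(lam^2+lam+1)) := by
    linarith only [hid0, hK0]
  have hA0 : 0 ≤ (3 - (r 0 + r 1 + r 2))/2 - 2*(r 0) + (r 0 + r 1 + r 2 - 1)*1 :=
    le_of_mul_le_mul_right (by linarith only [hE0]) (by positivity : 0 < 2*(lam^2+lam+1))
  have hq0 : (1/2 - t 0) * (2*(1-β)) = (3 - (r 0 + r 1 + r 2))/2 - 2*(r 0) + (r 0 + r 1 + r 2 - 1)*1 := by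
    linear_combination (-2)*ht0 + (1)*hβ
  have hhalf0 : t 0 ≤ 1/2 := by
    have h := le_of_mul_le_mul_right
      (by linarith only [hq0, hA0] : 0 * (2*(1-β)) ≤ (1/2 - t 0) * (2*(1-β)))
      (by linarith only [hβpos] : 0 < 2*(1-β))
    linarith only [h]
  have ht1 : t 1 * (1 - β) = r 1 - β := by
    rw [ht 1, hClam, show lbar (Fin.succ 1) = -1 from rfl, Fin.cons_succ]
    field_simp
    ring
  have hid1 : ((3 - (r 0 + r 1 + r 2))/2 - 2*(r 1) + (r 0 + r 1 + r 2 - 1)*1) * (2*(lam^2+lam+1)) = 3*(lam^2+lam+1) - ((lam^8+lam^7-lam^10) + lam^2 + 1) - 4*(lam^2) + 2*(((lam^8+lam^7-lam^10) + lam^2 + 1) - (lam^2+lam+1)) := by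
    linear_combination hsum - 4*hr1
  have hE1 : 0 ≤ ((3 - (r 0 + r 1 + r 2))/2 - 2*(r 1) + (r 0 + r 1 + r 2 - 1)*1) * (2*(lam^2+lam+1)) := by
    linarith only [hid1, hK1]
  have hA1 : 0 ≤ (3 - (r 0 + r 1 + r 2))/2 - 2*(r 1) + (r 0 + r 1 + r 2 - 1)*1 :=
    le_of_mul_le_mul_right (by linarith only [hE1]) (by positivity : 0 < 2*(lam^2+lam+1))
  have hq1 : (1/2 - t 1) * (2*(1-β)) = (3 - (r 0 + r 1 + r 2))/2 - 2*(r 1) + (r 0 + r 1 + r 2 - 1)*1 := by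
    linear_combination (-2)*ht1 + (1)*hβ
  have hhalf1 : t 1 ≤ 1/2 := by
    have h := le_of_mul_le_mul_right
      (by linarith only [hq1, hA1] : 0 * (2*(1-β)) ≤ (1/2 - t 1) * (2*(1-β)))
      (by linarith only [hβpos] : 0 < 2*(1-β))
    linarith only [h]
  have ht2 : t 2 * (1 - β) = r 2 - β := by
    rw [ht 2, hClam, show lbar (Fin.succ 2) = -1 from rfl, Fin.cons_succ]
    field_simp
    ring
  have hid2 : ((3 - (r 0 + r 1 + r 2))/2 - 2*(r 2) + (r 0 + r 1 + r 2 - 1)*1) * (2*(lam^2+lam+1)) = 3*(lam^2+lam+1) - ((lam^8+lam^7-lam^10) + lam^2 + 1) - 4*((1:ℝ)) + 2*(((lam^8+lam^7-lam^10) + lam^2 + 1) - (lam^2+lam+1)) := by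
    linear_combination hsum - 4*hr2
  have hE2 : 0 ≤ ((3 - (r 0 + r 1 + r 2))/2 - 2*(r 2) + (r 0 + r 1 + r 2 - 1)*1) * (2*(lam^2+lam+1)) := by
    linarith only [hid2, hK2]
  have hA2 : 0 ≤ (3 - (r 0 + r 1 + r 2))/2 - 2*(r 2) + (r 0 + r 1 + r 2 - 1)*1 :=
    le_of_mul_le_mul_right (by linarith only [hE2]) (by positivity : 0 < 2*(lam^2+lam+1))
  have hq2 : (1/2 - t 2) * (2*(1-β)) = (3 - (r 0 + r 1 + r 2))/2 - 2*(r 2) + (r 0 + r 1 + r 2 - 1)*1 := by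
    linear_combination (-2)*ht2 + (1)*hβ
  have hhalf2 : t 2 ≤ 1/2 := by
    have h := le_of_mul_le_mul_right
      (by linarith only [hq2, hA2] : 0 * (2*(1-β)) ≤ (1/2 - t 2) * (2*(1-β)))
      (by linarith only [hβpos] : 0 < 2*(1-β))
    linarith only [h]
  have ht3 : t 3 * (1 - β) = r 3 := by
    rw [ht 3, hClam, show lbar (Fin.succ 3) = 0 from rfl, Fin.cons_succ]
    field_simp
    ring
  have hid3 : ((3 - (r 0 + r 1 + r 2))/2 - 2*(r 3) + (r 0 + r 1 + r 2 - 1)*0) * (2*(lam^2+lam+1)) = 3*(lam^2+lam+1) - ((lam^8+lam^7-lam^10) + lam^2 + 1) - 4*(lam+1-lam^3) := by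
    linear_combination -hsum - 4*hr3
  have hE3 : 0 ≤ ((3 - (r 0 + r 1 + r 2))/2 - 2*(r 3) + (r 0 + r 1 + r 2 - 1)*0) * (2*(lam^2+lam+1)) := by
    linarith only [hid3, hK3]
  have hA3 : 0 ≤ (3 - (r 0 + r 1 + r 2))/2 - 2*(r 3) + (r 0 + r 1 + r 2 - 1)*0 :=
    le_of_mul_le_mul_right (by linarith only [hE3]) (by positivity : 0 < 2*(lam^2+lam+1))
  have hq3 : (1/2 - t 3) * (2*(1-β)) = (3 - (r 0 + r 1 + r 2))/2 - 2*(r 3) + (r 0 + r 1 + r 2 - 1)*0 := by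
    linear_combination (-2)*ht3 + (-1)*hβ
  have hhalf3 : t 3 ≤ 1/2 := by
    have h := le_of_mul_le_mul_right
      (by linarith only [hq3, hA3] : 0 * (2*(1-β)) ≤ (1/2 - t 3) * (2*(1-β)))
      (by linarith only [hβpos] : 0 < 2*(1-β))
    linarith only [h]
  have ht4 : t 4 * (1 - β) = r 4 := by
    rw [ht 4, hClam, show lbar (Fin.succ 4) = 0 from rfl, Fin.cons_succ]
    field_simp
    ring
  have hid4 : ((3 - (r 0 + r 1 + r 2))/2 - 2*(r 4) + (r 0 + r 1 + r 2 - 1)*0) * (2*(lam^2+lam+1)) = 3*(lam^2+lam+1) - ((lam^8+lam^7-lam^10) + lam^2 + 1) - 4*(lam^2+lam^1-lam^4) := by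
    linear_combination -hsum - 4*hr4
  have hE4 : 0 ≤ ((3 - (r 0 + r 1 + r 2))/2 - 2*(r 4) + (r 0 + r 1 + r 2 - 1)*0) * (2*(lam^2+lam+1)) := by
    linarith only [hid4, hK4]
  have hA4 : 0 ≤ (3 - (r 0 + r 1 + r 2))/2 - 2*(r 4) + (r 0 + r 1 + r 2 - 1)*0 :=
    le_of_mul_le_mul_right (by linarith only [hE4]) (by positivity : 0 < 2*(lam^2+lam+1))
  have hq4 : (1/2 - t 4) * (2*(1-β)) = (3 - (r 0 + r 1 + r 2))/2 - 2*(r 4) + (r 0 + r 1 + r 2 - 1)*0 := by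
    linear_combination (-2)*ht4 + (-1)*hβ
  have hhalf4 : t 4 ≤ 1/2 := by
    have h := le_of_mul_le_mul_right
      (by linarith only [hq4, hA4] : 0 * (2*(1-β)) ≤ (1/2 - t 4) * (2*(1-β)))
      (by linarith only [hβpos] : 0 < 2*(1-β))
    linarith only [h]
  have ht5 : t 5 * (1 - β) = r 5 := by
    rw [ht 5, hClam, show lbar (Fin.succ 5) = 0 from rfl, Fin.cons_succ]
    field_simp
    ring
  have hid5 : ((3 - (r 0 + r 1 + r 2))/2 - 2*(r 5) + (r 0 + r 1 + r 2 - 1)*0) * (2*(lam^2+lam+1)) = 3*(lam^2+lam+1) - ((lam^8+lam^7-lam^10) + lam^2 + 1) - 4*(lam^3+lam^2-lam^5) := by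
    linear_combination -hsum - 4*hr5
  have hE5 : 0 ≤ ((3 - (r 0 + r 1 + r 2))/2 - 2*(r 5) + (r 0 + r 1 + r 2 - 1)*0) * (2*(lam^2+lam+1)) := by
    linarith only [hid5, hK5]
  have hA5 : 0 ≤ (3 - (r 0 + r 1 + r 2))/2 - 2*(r 5) + (r 0 + r 1 + r 2 - 1)*0 :=
    le_of_mul_le_mul_right (by linarith only [hE5]) (by positivity : 0 < 2*(lam^2+lam+1))
  have hq5 : (1/2 - t 5) * (2*(1-β)) = (3 - (r 0 + r 1 + r 2))/2 - 2*(r 5) + (r 0 + r 1 + r 2 - 1)*0 := by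
    linear_combination (-2)*ht5 + (-1)*hβ
  have hhalf5 : t 5 ≤ 1/2 := by
    have h := le_of_mul_le_mul_right
      (by linarith only [hq5, hA5] : 0 * (2*(1-β)) ≤ (1/2 - t 5) * (2*(1-β)))
      (by linarith only [hβpos] : 0 < 2*(1-β))
    linarith only [h]
  have ht6 : t 6 * (1 - β) = r 6 := by
    rw [ht 6, hClam, show lbar (Fin.succ 6) = 0 from rfl, Fin.cons_succ]
    field_simp
    ring
  have hid6 : ((3 - (r 0 + r 1 + r 2))/2 - 2*(r 6) + (r 0 + r 1 + r 2 - 1)*0) * (2*(lam^2+lam+1)) = 3*(lam^2+lam+1) - ((lam^8+lam^7-lam^10) + lam^2 + 1) - 4*(lam^4+lam^3-lam^6) := by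
    linear_combination -hsum - 4*hr6
  have hE6 : 0 ≤ ((3 - (r 0 + r 1 + r 2))/2 - 2*(r 6) + (r 0 + r 1 + r 2 - 1)*0) * (2*(lam^2+lam+1)) := by
    linarith only [hid6, hK6]
  have hA6 : 0 ≤ (3 - (r 0 + r 1 + r 2))/2 - 2*(r 6) + (r 0 + r 1 + r 2 - 1)*0 :=
    le_of_mul_le_mul_right (by linarith only [hE6]) (by positivity : 0 < 2*(lam^2+lam+1))
  have hq6 : (1/2 - t 6) * (2*(1-β)) = (3 - (r 0 + r 1 + r 2))/2 - 2*(r 6) + (r 0 + r 1 + r 2 - 1)*0 := by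
    linear_combination (-2)*ht6 + (-1)*hβ
  have hhalf6 : t 6 ≤ 1/2 := by
    have h := le_of_mul_le_mul_right
      (by linarith only [hq6, hA6] : 0 * (2*(1-β)) ≤ (1/2 - t 6) * (2*(1-β)))
      (by linarith only [hβpos] : 0 < 2*(1-β))
    linarith only [h]
  have ht7 : t 7 * (1 - β) = r 7 := by
    rw [ht 7, hClam, show lbar (Fin.succ 7) = 0 from rfl, Fin.cons_succ]
    field_simp
    ring
  have hid7 : ((3 - (r 0 + r 1 + r 2))/2 - 2*(r 7) + (r 0 + r 1 + r 2 - 1)*0) * (2*(lam^2+lam+1)) = 3*(lam^2+lam+1) - ((lam^8+lam^7-lam^10) + lam^2 + 1) - 4*(lam^5+lam^4-lam^7) := by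
    linear_combination -hsum - 4*hr7
  have hE7 : 0 ≤ ((3 - (r 0 + r 1 + r 2))/2 - 2*(r 7) + (r 0 + r 1 + r 2 - 1)*0) * (2*(lam^2+lam+1)) := by
    linarith only [hid7, hK7]
  have hA7 : 0 ≤ (3 - (r 0 + r 1 + r 2))/2 - 2*(r 7) + (r 0 + r 1 + r 2 - 1)*0 :=
    le_of_mul_le_mul_right (by linarith only [hE7]) (by positivity : 0 < 2*(lam^2+lam+1))
  have hq7 : (1/2 - t 7) * (2*(1-β)) = (3 - (r 0 + r 1 + r 2))/2 - 2*(r 7) + (r 0 + r 1 + r 2 - 1)*0 := by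
    linear_combination (-2)*ht7 + (-1)*hβ
  have hhalf7 : t 7 ≤ 1/2 := by
    have h := le_of_mul_le_mul_right
      (by linarith only [hq7, hA7] : 0 * (2*(1-β)) ≤ (1/2 - t 7) * (2*(1-β)))
      (by linarith only [hβpos] : 0 < 2*(1-β))
    linarith only [h]
  have ht8 : t 8 * (1 - β) = r 8 := by
    rw [ht 8, hClam, show lbar (Fin.succ 8) = 0 from rfl, Fin.cons_succ]
    field_simp
    ring
  have hid8 : ((3 - (r 0 + r 1 + r 2))/2 - 2*(r 8) + (r 0 + r 1 + r 2 - 1)*0) * (2*(lam^2+lam+1)) = 3*(lam^2+lam+1) - ((lam^8+lam^7-lam^10) + lam^2 + 1) - 4*(lam^6+lam^5-lam^8) := by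
    linear_combination -hsum - 4*hr8
  have hE8 : 0 ≤ ((3 - (r 0 + r 1 + r 2))/2 - 2*(r 8) + (r 0 + r 1 + r 2 - 1)*0) * (2*(lam^2+lam+1)) := by
    linarith only [hid8, hK8]
  have hA8 : 0 ≤ (3 - (r 0 + r 1 + r 2))/2 - 2*(r 8) + (r 0 + r 1 + r 2 - 1)*0 :=
    le_of_mul_le_mul_right (by linarith only [hE8]) (by positivity : 0 < 2*(lam^2+lam+1))
  have hq8 : (1/2 - t 8) * (2*(1-β)) = (3 - (r 0 + r 1 + r 2))/2 - 2*(r 8) + (r 0 + r 1 + r 2 - 1)*0 := by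
    linear_combination (-2)*ht8 + (-1)*hβ
  have hhalf8 : t 8 ≤ 1/2 := by
    have h := le_of_mul_le_mul_right
      (by linarith only [hq8, hA8] : 0 * (2*(1-β)) ≤ (1/2 - t 8) * (2*(1-β)))
      (by linarith only [hβpos] : 0 < 2*(1-β))
    linarith only [h]
  have ht9 : t 9 * (1 - β) = r 9 := by
    rw [ht 9, hClam, show lbar (Fin.succ 9) = 0 from rfl, Fin.cons_succ]
    field_simp
    ring
  have hid9 : ((3 - (r 0 + r 1 + r 2))/2 - 2*(r 9) + (r 0 + r 1 + r 2 - 1)*0) * (2*(lam^2+lam+1)) = 3*(lam^2+lam+1) - ((lam^8+lam^7-lam^10) + lam^2 + 1) - 4*(lam^7+lam^6-lam^9) := by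
    linear_combination -hsum - 4*hr9
  have hE9 : 0 ≤ ((3 - (r 0 + r 1 + r 2))/2 - 2*(r 9) + (r 0 + r 1 + r 2 - 1)*0) * (2*(lam^2+lam+1)) := by
    linarith only [hid9, hK9]
  have hA9 : 0 ≤ (3 - (r 0 + r 1 + r 2))/2 - 2*(r 9) + (r 0 + r 1 + r 2 - 1)*0 :=
    le_of_mul_le_mul_right (by linarith only [hE9]) (by positivity : 0 < 2*(lam^2+lam+1))
  have hq9 : (1/2 - t 9) * (2*(1-β)) = (3 - (r 0 + r 1 + r 2))/2 - 2*(r 9) + (r 0 + r 1 + r 2 - 1)*0 := by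
    linear_combination (-2)*ht9 + (-1)*hβ
  have hhalf9 : t 9 ≤ 1/2 := by
    have h := le_of_mul_le_mul_right
      (by linarith only [hq9, hA9] : 0 * (2*(1-β)) ≤ (1/2 - t 9) * (2*(1-β)))
      (by linarith only [hβpos] : 0 < 2*(1-β))
    linarith only [h]
  have hhalf : ∀ i : Fin 10, t i ≤ 1/2 := by
    intro i
    fin_cases i <;> assumption
  constructor
  · intro i j _
    linarith only [hhalf i, hhalf j]
  · have hz : (t 0 + t 1 + t 2 - 1) * (1 - β) = 0 := by
      linear_combination ht0 + ht1 + ht2 - 2*hβ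
    rcases mul_eq_zero.mp hz with h | h
    · linarith only [sub_eq_zero.mp h]
    · exact absurd (by linarith only [h] : β = 1) hβ1
end
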